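/- arXiv:1509.04721 — 7 statements merged into one kernel-verified Lean document; each statement's English description precedes it below -/
import Mathlib

section
/- For every L > 0, the smallest positive root Ω of the equation 2 sin(ωπ) sin(ωL) = cos(ωπ) cos(ωL) satisfies Ω < 1/2. -/
open Real

theorem smallest_root_lt_half (L : ℝ) (hL : 0 < L) (Ω : ℝ)
    (hΩ : IsLeast {ω : ℝ | 0 < ω ∧
      2 * Real.sin (ω * π) * Real.sin (ω * L) = Real.cos (ω * π) * Real.cos (ω * L)} Ω) :
    Ω < 1 / 2 := by
  obtain ⟨⟨hΩpos, hΩeq⟩, hlb⟩ := hΩ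
  have hπ := Real.pi_pos
  set f : ℝ → ℝ := fun ω =>
    2 * Real.sin (ω * π) * Real.sin (ω * L) - Real.cos (ω * π) * Real.cos (ω * L) with hf
  have hcont : Continuous f := by fun_prop
  have hf0 : f 0 = -1 := by simp [hf]
  obtain ⟨b, hb0, hb2, hfb⟩ : ∃ b, 0 < b ∧ b ≤ 1 / 2 ∧ 0 < f b := by
    rcases le_or_gt L π with h | h
    · refine ⟨1 / 2, by norm_num, le_refl _, ?_⟩
      have h1 : (1 / 2 : ℝ) * π = π / 2 := by ring
      have h2 : (1 / 2 : ℝ) * L = L / 2 := by ring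
      have hsin : 0 < Real.sin (L / 2) :=
        Real.sin_pos_of_pos_of_lt_pi (by linarith) (by linarith)
      simp only [hf, h1, h2, Real.cos_pi_div_two, Real.sin_pi_div_two]
      nlinarith
    · refine ⟨π / (2 * L), by positivity, ?_, ?_⟩
      · rw [div_le_div_iff₀ (by positivity) (by norm_num)]
        nlinarith
      · have h1 : (π / (2 * L)) * L = π / 2 := by
          field_simp
        have h2 : 0 < Real.sin (π / (2 * L) * π) := by
          apply Real.sin_pos_of_pos_of_lt_pi (by positivity)
          rw [div_mul_eq_mul_div, div_lt_iff₀ (by positivity)]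
          nlinarith
        simp only [hf, h1, Real.cos_pi_div_two, Real.sin_pi_div_two]
        nlinarith
  have hIVT := intermediate_value_Ioo (le_of_lt hb0) (hcont.continuousOn (s := Set.Icc 0 b))
  have hmem : (0 : ℝ) ∈ Set.Ioo (f 0) (f b) := by
    rw [hf0]; constructor <;> [norm_num; exact hfb]
  obtain ⟨c, hcmem, hceq⟩ := hIVT hmem
  have hc0 : 0 < c := hcmem.1
  have hcb : c < b := hcmem.2
  have hceq' : 2 * Real.sin (c * π) * Real.sin (c * L) = Real.cos (c * π) * Real.cos (c * L) := by
    have : f c = 0 := hceq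
    simp only [hf] at this
    linarith
  have := hlb ⟨hc0, hceq'⟩
  linarith
end

section
/- For every L > 0, the smallest positive root Ω of the equation 2 sin(ωπ) sin(ωL) = cos(ωπ) cos(ωL) satisfies Ω < π/(2L). -/
open Real

theorem smallest_root_lt_pi_div_two_L (L : ℝ) (hL : 0 < L) (Ω : ℝ)
    (hΩ : IsLeast {ω : ℝ | 0 < ω ∧
      2 * Real.sin (ω * π) * Real.sin (ω * L) = Real.cos (ω * π) * Real.cos (ω * L)} Ω) :
    Ω < π / (2 * L) := by
  set f : ℝ → ℝ := fun ω => Real.cos (ω * π) * Real.cos (ω * L)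
    - 2 * Real.sin (ω * π) * Real.sin (ω * L) with hf
  have hcont : Continuous f := by fun_prop
  have hpi := Real.pi_pos
  set t : ℝ := min (1/2) (π / (2 * L)) with ht
  have ht0 : 0 < t := lt_min (by norm_num) (by positivity)
  have hft : f t < 0 := by
    rcases le_total (1/2 : ℝ) (π / (2 * L)) with h | h
    · have htv : t = 1/2 := min_eq_left h
      have hLpi : L ≤ π := by
        rw [le_div_iff₀ (by positivity)] at h
        linarith
      have : Real.sin (L / 2) > 0 := Real.sin_pos_of_pos_of_lt_pi (by linarith) (by linarith)
      simp only [hf, htv]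
      have h1 : (1/2 : ℝ) * π = π / 2 := by ring
      have h2 : (1/2 : ℝ) * L = L / 2 := by ring
      rw [h1, h2, Real.cos_pi_div_two, Real.sin_pi_div_two]
      nlinarith
    · have htv : t = π / (2 * L) := min_eq_right h
      have hpiL : π ≤ L := by
        rw [div_le_iff₀ (by positivity)] at h
        linarith
      have hL2 : π / (2 * L) * L = π / 2 := by field_simp
      have harg : 0 < π / (2 * L) * π := by positivity
      have harg2 : π / (2 * L) * π < π := by
        rw [div_mul_eq_mul_div, div_lt_iff₀ (by positivity)]
        nlinarith
      have hs : Real.sin (π / (2 * L) * π) > 0 :=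
        Real.sin_pos_of_pos_of_lt_pi harg harg2
      simp only [hf, htv, hL2, Real.cos_pi_div_two, Real.sin_pi_div_two]
      nlinarith
  have hf0 : f 0 = 1 := by simp [hf]
  have hsub : Set.Ioo (f t) (f 0) ⊆ f '' Set.Ioo 0 t :=
    intermediate_value_Ioo' (le_of_lt ht0) hcont.continuousOn
  have h0mem : (0 : ℝ) ∈ Set.Ioo (f t) (f 0) := by
    rw [hf0]; exact ⟨hft, by norm_num⟩
  obtain ⟨c, hc, hfc⟩ := hsub h0mem
  have hcset : c ∈ {ω : ℝ | 0 < ω ∧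
      2 * Real.sin (ω * π) * Real.sin (ω * L) = Real.cos (ω * π) * Real.cos (ω * L)} := by
    refine ⟨hc.1, ?_⟩
    simp only [hf] at hfc
    linarith
  have hΩc : Ω ≤ c := hΩ.2 hcset
  calc Ω ≤ c := hΩc
    _ < t := hc.2
    _ ≤ π / (2 * L) := min_le_right _ _
end

section
/- As L → 0⁺, the smallest positive root Ω₁(L) of the equation 2 sin(ωπ) sin(ωL) = cos(ωπ) cos(ωL) converges to 1/2. -/
open Real Filter

theorem smallest_root_tendsto_half (Ω₁ : ℝ → ℝ)
    (hΩ : ∀ L : ℝ, 0 < L → IsLeast {ω : ℝ | 0 < ω ∧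
      2 * Real.sin (ω * π) * Real.sin (ω * L) = Real.cos (ω * π) * Real.cos (ω * L)} (Ω₁ L)) :
    Filter.Tendsto Ω₁ (nhdsWithin 0 (Set.Ioi 0)) (nhds (1 / 2)) := by
  have hπ := Real.pi_gt_three
  rw [Metric.tendsto_nhdsWithin_nhds]
  intro ε hε
  set ε' : ℝ := min ε (1/4) with hε'def
  have hε'pos : 0 < ε' := lt_min hε (by norm_num)
  have hε'le : ε' ≤ 1/4 := min_le_right _ _
  have hε'ε : ε' ≤ ε := min_le_left _ _
  have hsin : 0 < Real.sin (ε' * π) :=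
    Real.sin_pos_of_pos_of_lt_pi (by positivity) (by nlinarith)
  refine ⟨min 1 (Real.sin (ε' * π) / 2), by positivity, ?_⟩
  intro L hL hdist
  simp only [Set.mem_Ioi] at hL
  rw [Real.dist_eq, sub_zero, abs_of_pos hL] at hdist
  have hL1 : L < 1 := lt_of_lt_of_le hdist (min_le_left _ _)
  have hL2 : L < Real.sin (ε' * π) / 2 := lt_of_lt_of_le hdist (min_le_right _ _)
  obtain ⟨⟨hωpos, heq⟩, hlb⟩ := hΩ L hL
  -- upper bound : Ω₁ L ≤ 1/2
  have hub : Ω₁ L ≤ 1 / 2 := by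
    set f : ℝ → ℝ := fun ω =>
      2 * Real.sin (ω * π) * Real.sin (ω * L) - Real.cos (ω * π) * Real.cos (ω * L) with hf
    have hcont : ContinuousOn f (Set.Icc 0 (1/2)) := by fun_prop
    have h0 : f 0 = -1 := by simp [hf]
    have h12 : f (1/2) = 2 * Real.sin (L / 2) := by
      have e1 : (1/2 : ℝ) * π = π / 2 := by ring
      have e2 : (1/2 : ℝ) * L = L / 2 := by ring
      show 2 * Real.sin ((1/2:ℝ) * π) * Real.sin ((1/2:ℝ) * L) -
          Real.cos ((1/2:ℝ) * π) * Real.cos ((1/2:ℝ) * L) = 2 * Real.sin (L / 2)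
      rw [e1, e2, Real.sin_pi_div_two, Real.cos_pi_div_two]
      ring
    have hsL : 0 ≤ Real.sin (L / 2) :=
      Real.sin_nonneg_of_nonneg_of_le_pi (by linarith) (by linarith)
    have h0mem : (0 : ℝ) ∈ Set.Icc (f 0) (f (1/2)) := by
      rw [h0, h12]; constructor <;> linarith
    obtain ⟨c, hcIcc, hfc⟩ := intermediate_value_Icc (by norm_num) hcont h0mem
    have hcpos : 0 < c := by
      rcases lt_or_eq_of_le hcIcc.1 with h | h
      · exact h
      · exfalso; rw [← h] at hfc; rw [h0] at hfc; norm_num at hfc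
    have : Ω₁ L ≤ c := hlb ⟨hcpos, by simpa [hf, sub_eq_zero] using hfc⟩
    linarith [hcIcc.2]
  -- lower bound : 1/2 - ε' < Ω₁ L
  have hlow : 1 / 2 - ε' < Ω₁ L := by
    by_contra h
    push_neg at h
    set ω := Ω₁ L with hω
    have hωle : ω ≤ 1/2 - ε' := h
    have hωπ : ω * π ≤ π / 2 - ε' * π := by nlinarith
    have hcos1 : Real.sin (ε' * π) ≤ Real.cos (ω * π) := by
      have := Real.cos_le_cos_of_nonneg_of_le_pi (x := ω * π) (y := π/2 - ε' * π)
        (by positivity) (by nlinarith) hωπ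
      rwa [Real.cos_pi_div_two_sub] at this
    have hωL : ω * L ≤ 1/2 := by nlinarith
    have hcos2 : (1/2 : ℝ) ≤ Real.cos (ω * L) := by
      have := Real.cos_le_cos_of_nonneg_of_le_pi (x := ω * L) (y := π/3)
        (by positivity) (by linarith) (by nlinarith)
      rwa [Real.cos_pi_div_three] at this
    have hsin1 : Real.sin (ω * π) ≤ 1 := Real.sin_le_one _
    have hsin1' : 0 ≤ Real.sin (ω * π) :=
      Real.sin_nonneg_of_nonneg_of_le_pi (by positivity) (by nlinarith)
    have hsin2 : Real.sin (ω * L) ≤ ω * L := Real.sin_le (by positivity)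
    have hsin2' : 0 ≤ Real.sin (ω * L) :=
      Real.sin_nonneg_of_nonneg_of_le_pi (by positivity) (by nlinarith)
    nlinarith [mul_le_of_le_one_left hsin2' hsin1]
  rw [Real.dist_eq, abs_sub_comm, abs_of_nonneg (by linarith)]
  linarith
end

section
/- As L → ∞, the smallest positive root Ω₁(L) of the equation 2 sin(ωπ) sin(ωL) = cos(ωπ) cos(ωL) satisfies 2L·Ω₁(L) → π. -/
open Real Filter

set_option maxHeartbeats 1000000 in
theorem smallest_root_asymptotic (Ω₁ : ℝ → ℝ)
    (hΩ : ∀ L : ℝ, 0 < L → IsLeast {ω : ℝ | 0 < ω ∧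
      2 * Real.sin (ω * π) * Real.sin (ω * L) = Real.cos (ω * π) * Real.cos (ω * L)} (Ω₁ L)) :
    Filter.Tendsto (fun L => 2 * L * Ω₁ L) Filter.atTop (nhds π) := by
  rw [Metric.tendsto_atTop]
  intro ε hε
  have hπ := pi_pos
  have hπ3 : (3:ℝ) < π := Real.pi_gt_three
  obtain ⟨δ, hδpos, hδle, hδε⟩ : ∃ δ : ℝ, 0 < δ ∧ δ ≤ π/4 ∧ δ ≤ ε/4 :=
    ⟨min (ε/4) (π/4), lt_min (by linarith) (by positivity), min_le_right _ _, min_le_left _ _⟩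
  obtain ⟨c, hcdef⟩ : ∃ c : ℝ, c = π/2 - δ := ⟨_, rfl⟩
  have hc0 : 0 < c := by rw [hcdef]; linarith
  have hclt : c < π/2 := by rw [hcdef]; linarith
  have hcosc : 0 < Real.cos c := Real.cos_pos_of_mem_Ioo ⟨by linarith, hclt⟩
  have hcosc1 : Real.cos c ≤ 1 := Real.cos_le_one c
  refine ⟨max π (4*c*π/Real.cos c + 1), fun L hL => ?_⟩
  have hLπ : π ≤ L := le_trans (le_max_left _ _) hL
  have hL2 : 4*c*π/Real.cos c + 1 ≤ L := le_trans (le_max_right _ _) hL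
  have hLpos : 0 < L := lt_of_lt_of_le hπ hLπ
  have hL3 : 4*c*π < L * Real.cos c := by
    rw [div_add' _ _ _ (ne_of_gt hcosc), div_le_iff₀ hcosc] at hL2
    nlinarith
  have hcπL : c * π / L ≤ 1 := by
    rw [div_le_one hLpos]
    nlinarith
  obtain ⟨⟨hΩpos, hΩeq⟩, hΩleast⟩ := hΩ L hLpos
  -- upper bound: Ω₁ L < π/(2L)
  have hupper : Ω₁ L < π / (2*L) := by
    set g : ℝ → ℝ := fun ω => 2 * Real.sin (ω*π) * Real.sin (ω*L) -
      Real.cos (ω*π) * Real.cos (ω*L) with hg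
    have hcont : ContinuousOn g (Set.Icc 0 (π/(2*L))) := by
      apply Continuous.continuousOn
      fun_prop
    have hga : g 0 = -1 := by simp [hg]
    have hgb : 0 < g (π/(2*L)) := by
      have h1 : π/(2*L) * L = π/2 := by field_simp
      have h2 : 0 < π/(2*L) * π := by positivity
      have h3 : π/(2*L) * π < π := by
        rw [div_mul_eq_mul_div, div_lt_iff₀ (by positivity)]
        nlinarith
      simp only [hg, h1, Real.sin_pi_div_two, Real.cos_pi_div_two]
      have := Real.sin_pos_of_pos_of_lt_pi h2 h3
      nlinarith
    have h0mem : (0:ℝ) ∈ Set.Ioo (g 0) (g (π/(2*L))) := ⟨by rw [hga]; norm_num, hgb⟩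
    obtain ⟨x, hx, hgx⟩ := intermediate_value_Ioo (by positivity : (0:ℝ) ≤ π/(2*L)) hcont h0mem
    have hxset : x ∈ {ω : ℝ | 0 < ω ∧
        2 * Real.sin (ω * π) * Real.sin (ω * L) = Real.cos (ω * π) * Real.cos (ω * L)} := by
      refine ⟨hx.1, ?_⟩
      have hz : g x = 0 := hgx
      simp only [hg] at hz
      linarith
    exact lt_of_le_of_lt (hΩleast hxset) hx.2
  -- lower bound: c/L < Ω₁ L
  have hlower : c / L < Ω₁ L := by
    by_contra hcon
    push_neg at hcon
    have hωL : Ω₁ L * L ≤ c := by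
      calc Ω₁ L * L ≤ c / L * L := by nlinarith
        _ = c := by field_simp
    have hωLpos : 0 < Ω₁ L * L := by positivity
    have hωπpos : 0 < Ω₁ L * π := by positivity
    have hωπ : Ω₁ L * π ≤ c * π / L := by
      rw [le_div_iff₀ hLpos]
      nlinarith
    have hωπ1 : Ω₁ L * π ≤ 1 := le_trans hωπ hcπL
    -- LHS bound
    have hsin1 : Real.sin (Ω₁ L * π) ≤ Ω₁ L * π := Real.sin_le hωπpos.le
    have hsin1' : 0 ≤ Real.sin (Ω₁ L * π) :=
      Real.sin_nonneg_of_nonneg_of_le_pi hωπpos.le (by linarith)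
    have hsin2 : Real.sin (Ω₁ L * L) ≤ 1 := Real.sin_le_one _
    have hLHS : 2 * Real.sin (Ω₁ L * π) * Real.sin (Ω₁ L * L) ≤ 2 * (c * π / L) := by
      have h1 : Real.sin (Ω₁ L * π) * Real.sin (Ω₁ L * L) ≤ Real.sin (Ω₁ L * π) :=
        mul_le_of_le_one_right hsin1' hsin2
      linarith
    -- RHS bound
    have hcos1 : Real.cos (c * π / L) ≤ Real.cos (Ω₁ L * π) :=
      Real.cos_le_cos_of_nonneg_of_le_pi hωπpos.le (by linarith) hωπ
    have hcos2 : Real.cos c ≤ Real.cos (Ω₁ L * L) :=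
      Real.cos_le_cos_of_nonneg_of_le_pi hωLpos.le (by linarith) hωL
    have hcoshalf : (1:ℝ)/2 ≤ Real.cos (c * π / L) := by
      have := Real.one_sub_sq_div_two_le_cos (x := c * π / L)
      have hnn : 0 ≤ c * π / L := by positivity
      have hsq : (c * π / L) * (c * π / L) ≤ 1 * 1 := mul_le_mul hcπL hcπL hnn zero_le_one
      nlinarith [hsq]
    have hRHS : Real.cos c / 2 ≤ Real.cos (Ω₁ L * π) * Real.cos (Ω₁ L * L) := by
      have h1 : Real.cos (c * π / L) * Real.cos c ≤
          Real.cos (Ω₁ L * π) * Real.cos (Ω₁ L * L) :=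
        mul_le_mul hcos1 hcos2 hcosc.le (le_trans (by linarith) hcos1)
      have h2 : (1/2) * Real.cos c ≤ Real.cos (c * π / L) * Real.cos c :=
        mul_le_mul_of_nonneg_right hcoshalf hcosc.le
      linarith
    have hgap : 2 * (c * π / L) < Real.cos c / 2 := by
      have e : 2 * (c * π / L) = 2 * c * π / L := by ring
      rw [e, div_lt_div_iff₀ hLpos (by norm_num : (0:ℝ) < 2)]
      nlinarith
    linarith
  -- conclude
  rw [Real.dist_eq, abs_lt]
  have h1 : 2 * L * Ω₁ L < π := by
    have := hupper
    rw [lt_div_iff₀ (by positivity)] at this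
    nlinarith
  have h2 : 2 * c < 2 * L * Ω₁ L := by
    have := hlower
    rw [div_lt_iff₀ hLpos] at this
    nlinarith
  constructor <;> rw [hcdef] at h2 <;> linarith
end

section
/- The function v(ξ) = −(1/2)·tanh(ξ)·sech(ξ)·(sinh(ξ)cosh(ξ) + ξ) satisfies the linear inhomogeneous ODE −v'' + v − 6 sech²(ξ) v = 2 sech(ξ) on the real line. -/
open Real

theorem dn_derivative_equation :
    ∀ ξ : ℝ,
      -(deriv (deriv (fun ξ : ℝ =>
          -(1 / 2) * Real.tanh ξ * (1 / Real.cosh ξ) * (Real.sinh ξ * Real.cosh ξ + ξ))) ξ)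
        + (-(1 / 2) * Real.tanh ξ * (1 / Real.cosh ξ) * (Real.sinh ξ * Real.cosh ξ + ξ))
        - 6 * (1 / Real.cosh ξ) ^ 2 *
          (-(1 / 2) * Real.tanh ξ * (1 / Real.cosh ξ) * (Real.sinh ξ * Real.cosh ξ + ξ))
      = 2 * (1 / Real.cosh ξ) := by
  have hc : ∀ x : ℝ, Real.cosh x ≠ 0 := fun x => (Real.cosh_pos x).ne'
  have hfg : (fun ξ : ℝ =>
      -(1 / 2) * Real.tanh ξ * (1 / Real.cosh ξ) * (Real.sinh ξ * Real.cosh ξ + ξ)) =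
      fun x : ℝ => (-(1 / 2) * (Real.sinh x ^ 2 * Real.cosh x + x * Real.sinh x)) /
        Real.cosh x ^ 2 := by
    funext x
    rw [Real.tanh_eq_sinh_div_cosh]
    field_simp
  have hg : ∀ x : ℝ, HasDerivAt
      (fun x : ℝ => (-(1 / 2) * (Real.sinh x ^ 2 * Real.cosh x + x * Real.sinh x)) /
        Real.cosh x ^ 2)
      (-(1 / 2) * (Real.sinh x + 2 * Real.sinh x / Real.cosh x ^ 2
        + 2 * x / Real.cosh x ^ 3 - x / Real.cosh x)) x := by
    intro x
    have hs2 : HasDerivAt (fun x : ℝ => Real.sinh x ^ 2)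
        (2 * Real.sinh x * Real.cosh x) x := by
      simpa using (Real.hasDerivAt_sinh x).fun_pow 2
    have hN : HasDerivAt
        (fun x : ℝ => -(1 / 2) * (Real.sinh x ^ 2 * Real.cosh x + x * Real.sinh x))
        (-(1 / 2) * ((2 * Real.sinh x * Real.cosh x * Real.cosh x
          + Real.sinh x ^ 2 * Real.sinh x)
          + (1 * Real.sinh x + x * Real.cosh x))) x :=
      ((hs2.mul (Real.hasDerivAt_cosh x)).add
        ((hasDerivAt_id x).mul (Real.hasDerivAt_sinh x))).const_mul _
    have hD : HasDerivAt (fun x : ℝ => Real.cosh x ^ 2)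
        (2 * Real.cosh x * Real.sinh x) x := by
      simpa using (Real.hasDerivAt_cosh x).fun_pow 2
    have := hN.fun_div hD (pow_ne_zero 2 (hc x))
    refine this.congr_deriv (Eq.symm ?_)
    have h := Real.cosh_sq x
    field_simp
    linear_combination (2 * x + Real.sinh x * Real.cosh x) * h
  have hg2 : ∀ x : ℝ, HasDerivAt
      (fun x : ℝ => -(1 / 2) * (Real.sinh x + 2 * Real.sinh x / Real.cosh x ^ 2
        + 2 * x / Real.cosh x ^ 3 - x / Real.cosh x))
      (-(1 / 2) * (Real.cosh x
        + 2 * ((Real.cosh x * Real.cosh x ^ 2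
            - Real.sinh x * (2 * Real.cosh x * Real.sinh x)) / (Real.cosh x ^ 2) ^ 2)
        + 2 * ((1 * Real.cosh x ^ 3
            - x * (3 * Real.cosh x ^ 2 * Real.sinh x)) / (Real.cosh x ^ 3) ^ 2)
        - (1 * Real.cosh x - x * Real.sinh x) / Real.cosh x ^ 2)) x := by
    intro x
    have hD2 : HasDerivAt (fun x : ℝ => Real.cosh x ^ 2)
        (2 * Real.cosh x * Real.sinh x) x := by
      simpa using (Real.hasDerivAt_cosh x).fun_pow 2
    have hD3 : HasDerivAt (fun x : ℝ => Real.cosh x ^ 3)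
        (3 * Real.cosh x ^ 2 * Real.sinh x) x := by
      simpa using (Real.hasDerivAt_cosh x).fun_pow 3
    have h1 : HasDerivAt (fun x : ℝ => 2 * Real.sinh x / Real.cosh x ^ 2)
        ((2 * Real.cosh x * Real.cosh x ^ 2
          - 2 * Real.sinh x * (2 * Real.cosh x * Real.sinh x)) / (Real.cosh x ^ 2) ^ 2) x :=
      (((Real.hasDerivAt_sinh x).const_mul 2).div hD2 (pow_ne_zero 2 (hc x)))
    have h2 : HasDerivAt (fun x : ℝ => 2 * x / Real.cosh x ^ 3)
        ((2 * 1 * Real.cosh x ^ 3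
          - 2 * x * (3 * Real.cosh x ^ 2 * Real.sinh x)) / (Real.cosh x ^ 3) ^ 2) x :=
      (((hasDerivAt_id x).const_mul 2).div hD3 (pow_ne_zero 3 (hc x)))
    have h3 : HasDerivAt (fun x : ℝ => x / Real.cosh x)
        ((1 * Real.cosh x - x * Real.sinh x) / Real.cosh x ^ 2) x := by
      have := (hasDerivAt_id x).fun_div (Real.hasDerivAt_cosh x) (hc x)
      simpa using this
    have := ((((Real.hasDerivAt_sinh x).fun_add h1).fun_add h2).fun_sub h3).const_mul (-(1/2) : ℝ)
    refine this.congr_deriv (Eq.symm ?_)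
    ring
  intro ξ
  rw [hfg]
  have d1 : deriv (fun x : ℝ => (-(1 / 2) * (Real.sinh x ^ 2 * Real.cosh x + x * Real.sinh x)) /
      Real.cosh x ^ 2) = fun x : ℝ =>
      -(1 / 2) * (Real.sinh x + 2 * Real.sinh x / Real.cosh x ^ 2
        + 2 * x / Real.cosh x ^ 3 - x / Real.cosh x) :=
    funext fun x => (hg x).deriv
  rw [d1, (hg2 ξ).deriv]
  rw [Real.tanh_eq_sinh_div_cosh]
  have h := Real.cosh_sq ξ
  field_simp
  linear_combination (Real.cosh ξ ^ 3 - 2 * Real.cosh ξ) * h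
end

section
/- Suppose ω > 0 satisfies 2 tan(ωπ) + tan(ωL) = 0 with cos(ωπ) ≠ 0 and cos(ωL) ≠ 0. Then the function defined by u₀(x) = cos(ωx) on [−L,L] and u₊(x) = (cos(ωL)/cos(ωπ))·cos(ω(x−L−π)) on [L, L+2π] satisfies −u'' = ω²u on each edge, u₊(L) = u₊(L+2π) = u₀(L), and u₊'(L) − u₊'(L+2π) = u₀'(L). -/
open Real

lemma inner_deriv (ω a : ℝ) (x : ℝ) : HasDerivAt (fun x : ℝ => ω * (x - a)) ω x := by
  simpa using ((hasDerivAt_id x).sub_const a).const_mul ω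

lemma cos_deriv (ω a : ℝ) (x : ℝ) :
    HasDerivAt (fun x : ℝ => Real.cos (ω * (x - a))) (-Real.sin (ω * (x - a)) * ω) x :=
  by have := (Real.hasDerivAt_cos (ω * (x - a))).comp x (inner_deriv ω a x); exact this

lemma cos_deriv' (ω a : ℝ) :
    deriv (fun x : ℝ => Real.cos (ω * (x - a))) = fun x => -Real.sin (ω * (x - a)) * ω := by
  ext x; exact (cos_deriv ω a x).deriv

lemma sin_deriv (ω a : ℝ) (x : ℝ) :
    HasDerivAt (fun x : ℝ => Real.sin (ω * (x - a))) (Real.cos (ω * (x - a)) * ω) x :=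
  by have := (Real.hasDerivAt_sin (ω * (x - a))).comp x (inner_deriv ω a x); exact this

lemma second_deriv (ω a : ℝ) (x : ℝ) :
    deriv (deriv (fun x : ℝ => Real.cos (ω * (x - a)))) x =
      -(ω ^ 2 * Real.cos (ω * (x - a))) := by
  rw [cos_deriv' ω a]
  have : HasDerivAt (fun x : ℝ => -Real.sin (ω * (x - a)) * ω)
      (-(Real.cos (ω * (x - a)) * ω) * ω) x := ((sin_deriv ω a x).neg).mul_const ω
  rw [this.deriv]; ring

theorem even_eigenfunction (L ω : ℝ) (hL : 0 < L) (hω : 0 < ω)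
    (hcosπ : Real.cos (ω * π) ≠ 0) (hcosL : Real.cos (ω * L) ≠ 0)
    (hdisp : 2 * Real.tan (ω * π) + Real.tan (ω * L) = 0) :
    (∀ x : ℝ, -(deriv (deriv (fun x : ℝ => Real.cos (ω * x))) x) =
      ω ^ 2 * Real.cos (ω * x)) ∧
    (∀ x : ℝ, -(deriv (deriv (fun x : ℝ =>
        (Real.cos (ω * L) / Real.cos (ω * π)) * Real.cos (ω * (x - L - π)))) x) =
      ω ^ 2 * ((Real.cos (ω * L) / Real.cos (ω * π)) * Real.cos (ω * (x - L - π)))) ∧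
    (Real.cos (ω * L) / Real.cos (ω * π)) * Real.cos (ω * (L - L - π)) =
      (Real.cos (ω * L) / Real.cos (ω * π)) * Real.cos (ω * ((L + 2 * π) - L - π)) ∧
    (Real.cos (ω * L) / Real.cos (ω * π)) * Real.cos (ω * (L - L - π)) = Real.cos (ω * L) ∧
    deriv (fun x : ℝ => (Real.cos (ω * L) / Real.cos (ω * π)) * Real.cos (ω * (x - L - π))) L -
      deriv (fun x : ℝ => (Real.cos (ω * L) / Real.cos (ω * π)) * Real.cos (ω * (x - L - π)))
        (L + 2 * π) =
      deriv (fun x : ℝ => Real.cos (ω * x)) L := by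
  set C := Real.cos (ω * L) / Real.cos (ω * π) with hC
  have hfun0 : (fun x : ℝ => Real.cos (ω * x)) = fun x : ℝ => Real.cos (ω * (x - 0)) := by
    ext x; ring_nf
  have hfun1 : ∀ x : ℝ, ω * (x - L - π) = ω * (x - (L + π)) := fun x => by ring
  have hfun1' : (fun x : ℝ => C * Real.cos (ω * (x - L - π))) =
      fun x : ℝ => C * Real.cos (ω * (x - (L + π))) := by
    ext x; rw [hfun1]
  refine ⟨?_, ?_, ?_, ?_, ?_⟩
  · intro x
    rw [hfun0, second_deriv]
    ring_nf
  · intro x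
    have hd : ∀ y : ℝ, deriv (fun x : ℝ => C * Real.cos (ω * (x - (L + π)))) y =
        C * (-Real.sin (ω * (y - (L + π))) * ω) := fun y =>
      ((cos_deriv ω (L + π) y).const_mul C).deriv
    rw [hfun1']
    have hfun2 : deriv (fun x : ℝ => C * Real.cos (ω * (x - (L + π)))) =
        fun y => C * (-Real.sin (ω * (y - (L + π))) * ω) := funext hd
    rw [hfun2]
    have : HasDerivAt (fun y : ℝ => C * (-Real.sin (ω * (y - (L + π))) * ω))
        (C * (-(Real.cos (ω * (x - (L + π))) * ω) * ω)) x :=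
      (((sin_deriv ω (L + π) x).neg).mul_const ω).const_mul C
    rw [this.deriv, hfun1 x]
    ring
  · have : ω * (L - L - π) = -(ω * π) := by ring
    rw [this, Real.cos_neg]
    have : ω * ((L + 2 * π) - L - π) = ω * π := by ring
    rw [this]
  · have : ω * (L - L - π) = -(ω * π) := by ring
    rw [this, Real.cos_neg, hC, div_mul_cancel₀ _ hcosπ]
  · rw [hfun1']
    have hd : ∀ y : ℝ, deriv (fun x : ℝ => C * Real.cos (ω * (x - (L + π)))) y =
        C * (-Real.sin (ω * (y - (L + π))) * ω) := fun y =>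
      ((cos_deriv ω (L + π) y).const_mul C).deriv
    rw [hd, hd]
    have hd0 : deriv (fun x : ℝ => Real.cos (ω * x)) L = -Real.sin (ω * L) * ω := by
      rw [hfun0]; simpa using (cos_deriv ω 0 L).deriv
    rw [hd0]
    have h1 : ω * (L - (L + π)) = -(ω * π) := by ring
    have h2 : ω * ((L + 2 * π) - (L + π)) = ω * π := by ring
    rw [h1, h2, Real.sin_neg]
    -- goal: C * (-(-sin(ωπ)) * ω) - C * (-sin(ωπ) * ω) = -sin(ωL) * ω
    have key : 2 * C * Real.sin (ω * π) = -Real.sin (ω * L) := by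
      have h := hdisp
      rw [Real.tan_eq_sin_div_cos, Real.tan_eq_sin_div_cos] at h
      field_simp at h
      rw [hC]
      field_simp
      linarith [h]
    nlinarith [key]
end

section
/- Suppose ω > 0 satisfies 2 tan(ωπ) − cot(ωL) = 0 with cos(ωπ) ≠ 0 and sin(ωL) ≠ 0. Then the function defined by u₀(x) = sin(ωx) on [−L,L] and u₊(x) = (sin(ωL)/cos(ωπ))·cos(ω(x−L−π)) on [L, L+2π] satisfies −u'' = ω²u on each edge, u₊(L) = u₊(L+2π) = u₀(L), and u₊'(L) − u₊'(L+2π) = u₀'(L). -/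
open Real

lemma deriv_sin_mul (ω : ℝ) :
    deriv (fun x : ℝ => Real.sin (ω * x)) = fun x => ω * Real.cos (ω * x) := by
  funext x
  have h : HasDerivAt (fun x : ℝ => Real.sin (ω * x)) (Real.cos (ω * x) * ω) x := by
    have := (Real.hasDerivAt_sin (ω * x)).comp x ((hasDerivAt_id x).const_mul ω)
    simp only [mul_one] at this
    exact this
  rw [h.deriv]; ring

lemma deriv_cos_aff (A ω c : ℝ) :
    deriv (fun x : ℝ => A * Real.cos (ω * (x - c))) =
      fun x => -(A * ω * Real.sin (ω * (x - c))) := by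
  funext x
  have hin : HasDerivAt (fun x : ℝ => ω * (x - c)) ω x := by
    simpa using (((hasDerivAt_id x).sub_const c).const_mul ω)
  have h : HasDerivAt (fun x : ℝ => A * Real.cos (ω * (x - c)))
      (A * (-Real.sin (ω * (x - c)) * ω)) x := by
    have := (((Real.hasDerivAt_cos (ω * (x - c))).comp x hin)).const_mul A
    exact this
  rw [h.deriv]; ring

theorem odd_eigenfunction (L ω : ℝ) (hL : 0 < L) (hω : 0 < ω)
    (hcosπ : Real.cos (ω * π) ≠ 0) (hsinL : Real.sin (ω * L) ≠ 0)
    (hdisp : 2 * Real.tan (ω * π) - 1 / Real.tan (ω * L) = 0) :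
    (∀ x : ℝ, -(deriv (deriv (fun x : ℝ => Real.sin (ω * x))) x) =
      ω ^ 2 * Real.sin (ω * x)) ∧
    (∀ x : ℝ, -(deriv (deriv (fun x : ℝ =>
        (Real.sin (ω * L) / Real.cos (ω * π)) * Real.cos (ω * (x - L - π)))) x) =
      ω ^ 2 * ((Real.sin (ω * L) / Real.cos (ω * π)) * Real.cos (ω * (x - L - π)))) ∧
    (Real.sin (ω * L) / Real.cos (ω * π)) * Real.cos (ω * (L - L - π)) =
      (Real.sin (ω * L) / Real.cos (ω * π)) * Real.cos (ω * ((L + 2 * π) - L - π)) ∧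
    (Real.sin (ω * L) / Real.cos (ω * π)) * Real.cos (ω * (L - L - π)) = Real.sin (ω * L) ∧
    deriv (fun x : ℝ => (Real.sin (ω * L) / Real.cos (ω * π)) * Real.cos (ω * (x - L - π))) L -
      deriv (fun x : ℝ => (Real.sin (ω * L) / Real.cos (ω * π)) * Real.cos (ω * (x - L - π)))
        (L + 2 * π) =
      deriv (fun x : ℝ => Real.sin (ω * x)) L := by
  set A := Real.sin (ω * L) / Real.cos (ω * π) with hA
  have hf2 : (fun x : ℝ => A * Real.cos (ω * (x - L - π))) =
      fun x : ℝ => A * Real.cos (ω * (x - (L + π))) := by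
    funext x; ring_nf
  refine ⟨?_, ?_, ?_, ?_, ?_⟩
  · intro x
    rw [deriv_sin_mul]
    have h : ∀ y : ℝ, HasDerivAt (fun x : ℝ => ω * Real.cos (ω * x))
        (ω * (-Real.sin (ω * y) * ω)) y := fun y => by
      simpa [mul_assoc] using
        ((Real.hasDerivAt_cos (ω * y)).comp y ((hasDerivAt_id y).const_mul ω)).const_mul ω
    rw [(h x).deriv]; ring
  · intro x
    rw [hf2, deriv_cos_aff]
    have hin : ∀ y : ℝ, HasDerivAt (fun x : ℝ => ω * (x - (L + π))) ω y := fun y => by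
      simpa using (((hasDerivAt_id y).sub_const (L + π)).const_mul ω)
    have h : HasDerivAt (fun y : ℝ => -(A * ω * Real.sin (ω * (y - (L + π)))))
        (-(A * ω * (Real.cos (ω * (x - (L + π))) * ω))) x := by
      exact ((((Real.hasDerivAt_sin (ω * (x - (L + π)))).comp x (hin x)).const_mul
        (A * ω)).neg)
    rw [h.deriv]
    have : ω * (x - L - π) = ω * (x - (L + π)) := by ring
    rw [this]; ring
  · have h1 : ω * (L - L - π) = -(ω * π) := by ring
    have h2 : ω * ((L + 2 * π) - L - π) = ω * π := by ring
    rw [h1, h2, Real.cos_neg]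
  · have h1 : ω * (L - L - π) = -(ω * π) := by ring
    rw [h1, Real.cos_neg, hA, div_mul_cancel₀ _ hcosπ]
  · rw [hf2, deriv_cos_aff, deriv_sin_mul]
    have h1 : ω * (L - (L + π)) = -(ω * π) := by ring
    have h2 : ω * ((L + 2 * π) - (L + π)) = ω * π := by ring
    simp only []
    rw [h1, h2, Real.sin_neg]
    -- goal : -(A*ω*(-sin(ωπ))) - -(A*ω*sin(ωπ)) = ω * cos(ωL)
    have key : 2 * A * Real.sin (ω * π) = Real.cos (ω * L) := by
      by_cases hc : Real.cos (ω * L) = 0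
      · have htL : Real.tan (ω * L) = 0 := by rw [Real.tan_eq_sin_div_cos, hc, div_zero]
        have : Real.tan (ω * π) = 0 := by
          have := hdisp
          rw [htL, div_zero] at this
          linarith
        have hsπ : Real.sin (ω * π) = 0 := by
          rw [Real.tan_eq_sin_div_cos, div_eq_zero_iff] at this
          tauto
        rw [hsπ, hc]; ring
      · have htL : Real.tan (ω * L) ≠ 0 := by
          rw [Real.tan_eq_sin_div_cos]
          exact div_ne_zero hsinL hc
        have h : 2 * Real.tan (ω * π) = 1 / Real.tan (ω * L) := by linarith
        rw [Real.tan_eq_sin_div_cos, Real.tan_eq_sin_div_cos] at h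
        have h' : 2 * (Real.sin (ω * π) / Real.cos (ω * π)) =
            Real.cos (ω * L) / Real.sin (ω * L) := by
          rw [h, one_div_div]
        rw [hA]
        field_simp [hA] at h' ⊢
        linarith [h']
    calc -(A * ω * -Real.sin (ω * π)) - -(A * ω * Real.sin (ω * π))
        = ω * (2 * A * Real.sin (ω * π)) := by ring
      _ = ω * Real.cos (ω * L) := by rw [key]
end
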